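/- Fix positive integers n, d, L and reals ρ ≥ 0, β ≥ 0. There exists a constant C ≥ 0, depending only on ρ, β, n, d, L, such that the following holds. Let σ : ℝ → ℝ be ρ-Lipschitz with σ(0) = 0; let σ' : ℝ → ℝ satisfy |σ'(x)| ≤ β for all x and be ρ-Lipschitz; let Φ map n×d matrices to n×d matrices with ‖Φ(Z₁) − Φ(Z₂)‖ ≤ ρ·‖Z₁ − Z₂‖ and ‖Φ(Z)‖ ≤ β for all Z, Z₁, Z₂. Let A, A_SG be n×n matrices with ‖A‖ ≤ β, ‖A_SG‖ ≤ β, let X be an n×d matrix with ‖X‖ ≤ β, and let W^(0), …, W^(L−1) be d×d matrices with ‖W^(l)‖ ≤ β. Run the GCN forward recursion with σ to get Z^(l) (resp. Z_SG^(l) using A_SG), and run the backward recursion with σ', terminal gradients G^(L) = Φ(Z^(L)) and G_SG^(L) = Φ(Z_SG^(L)), obtaining G^(l) and G_SG^(l) (the latter using A_SG and Z_SG^(l)). Then ‖G_SG^(l) − G^(l)‖ ≤ C·‖A_SG − A‖ for all 1 ≤ l ≤ L. -/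
import Mathlib
open Matrix
attribute [local instance] Matrix.normedAddCommGroup

lemma mulNormBound {m k p : ℕ} (A : Matrix (Fin m) (Fin k) ℝ) (B : Matrix (Fin k) (Fin p) ℝ) :
    ‖A * B‖ ≤ (k : ℝ) * ‖A‖ * ‖B‖ := by
  rw [Matrix.norm_le_iff (by positivity)]
  intro i j
  rw [Matrix.mul_apply]
  calc ‖∑ x, A i x * B x j‖ ≤ ∑ x, ‖A i x * B x j‖ := norm_sum_le _ _
    _ ≤ ∑ _x : Fin k, ‖A‖ * ‖B‖ := Finset.sum_le_sum fun x _ => by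
        rw [norm_mul]
        exact mul_le_mul (A.norm_entry_le_entrywise_sup_norm)
          (B.norm_entry_le_entrywise_sup_norm) (norm_nonneg _) (norm_nonneg _)
    _ = (k : ℝ) * ‖A‖ * ‖B‖ := by
        simp [Finset.sum_const, Finset.card_univ, mul_assoc]

lemma hadNormBound {m k : ℕ} (A B : Matrix (Fin m) (Fin k) ℝ) :
    ‖Matrix.hadamard A B‖ ≤ ‖A‖ * ‖B‖ := by
  rw [Matrix.norm_le_iff (by positivity)]
  intro i j
  show ‖A i j * B i j‖ ≤ _
  rw [norm_mul]
  exact mul_le_mul (A.norm_entry_le_entrywise_sup_norm)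
    (B.norm_entry_le_entrywise_sup_norm) (norm_nonneg _) (norm_nonneg _)

lemma mapNormBound {m k : ℕ} {β : ℝ} (σ' : ℝ → ℝ) (h : ∀ x, |σ' x| ≤ β)
    (A : Matrix (Fin m) (Fin k) ℝ) : ‖A.map σ'‖ ≤ β := by
  have hβ : 0 ≤ β := le_trans (abs_nonneg _) (h 0)
  rw [Matrix.norm_le_iff hβ]
  intro i j
  simpa using h (A i j)

lemma mapLipBound {m k : ℕ} {ρ : ℝ} (hρ : 0 ≤ ρ) (σ : ℝ → ℝ)
    (h : ∀ x y, |σ x - σ y| ≤ ρ * |x - y|) (A B : Matrix (Fin m) (Fin k) ℝ) :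
    ‖A.map σ - B.map σ‖ ≤ ρ * ‖A - B‖ := by
  rw [Matrix.norm_le_iff (by positivity)]
  intro i j
  show ‖σ (A i j) - σ (B i j)‖ ≤ _
  rw [Real.norm_eq_abs]
  calc |σ (A i j) - σ (B i j)| ≤ ρ * |A i j - B i j| := h _ _
    _ ≤ ρ * ‖A - B‖ := by
        apply mul_le_mul_of_nonneg_left _ hρ
        exact (A - B).norm_entry_le_entrywise_sup_norm

lemma mapZeroBound {m k : ℕ} {ρ : ℝ} (hρ : 0 ≤ ρ) (σ : ℝ → ℝ)
    (h : ∀ x y, |σ x - σ y| ≤ ρ * |x - y|) (h0 : σ 0 = 0)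
    (A : Matrix (Fin m) (Fin k) ℝ) : ‖A.map σ‖ ≤ ρ * ‖A‖ := by
  rw [Matrix.norm_le_iff (by positivity)]
  intro i j
  show ‖σ (A i j)‖ ≤ _
  rw [Real.norm_eq_abs]
  calc |σ (A i j)| = |σ (A i j) - σ 0| := by rw [h0, sub_zero]
    _ ≤ ρ * |A i j - 0| := h _ _
    _ = ρ * |A i j| := by rw [sub_zero]
    _ ≤ ρ * ‖A‖ := mul_le_mul_of_nonneg_left (A.norm_entry_le_entrywise_sup_norm) hρ

lemma mulSplit {m k p : ℕ} (P P' : Matrix (Fin m) (Fin k) ℝ) (Q Q' : Matrix (Fin k) (Fin p) ℝ) :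
    P * Q - P' * Q' = (P - P') * Q + P' * (Q - Q') := by
  rw [Matrix.sub_mul, Matrix.mul_sub]; abel

lemma hadSplit {m k : ℕ} (A A' B B' : Matrix (Fin m) (Fin k) ℝ) :
    Matrix.hadamard A B - Matrix.hadamard A' B' =
      Matrix.hadamard (A - A') B + Matrix.hadamard A' (B - B') := by
  ext i j
  show A i j * B i j - A' i j * B' i j =
    (A i j - A' i j) * B i j + A' i j * (B i j - B' i j)
  ring

/-- The activations of the GCN forward recursion: `gcnH A X W σ 0 = X` and
`gcnH A X W σ (l+1) = σ(A * gcnH A X W σ l * W l)` entrywise. -/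
noncomputable def gcnH {n d : ℕ} (A : Matrix (Fin n) (Fin n) ℝ)
    (X : Matrix (Fin n) (Fin d) ℝ) (W : ℕ → Matrix (Fin d) (Fin d) ℝ)
    (σ : ℝ → ℝ) : ℕ → Matrix (Fin n) (Fin d) ℝ
  | 0 => X
  | l + 1 => (A * gcnH A X W σ l * W l).map σ

/-- The pre-activations of the GCN forward recursion:
`gcnZ A X W σ (l+1) = A * gcnH A X W σ l * W l` (the value at index 0 is junk). -/
noncomputable def gcnZ {n d : ℕ} (A : Matrix (Fin n) (Fin n) ℝ)
    (X : Matrix (Fin n) (Fin d) ℝ) (W : ℕ → Matrix (Fin d) (Fin d) ℝ)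
    (σ : ℝ → ℝ) : ℕ → Matrix (Fin n) (Fin d) ℝ
  | 0 => 0
  | l + 1 => A * gcnH A X W σ l * W l


lemma hBound {n d : ℕ} {ρ β : ℝ} (hρ : 0 ≤ ρ) (hβ : 0 ≤ β) (l : ℕ) :
    ∃ C : ℝ, 0 ≤ C ∧ ∀ (σ : ℝ → ℝ), (∀ x y : ℝ, |σ x - σ y| ≤ ρ * |x - y|) → σ 0 = 0 →
      ∀ (A : Matrix (Fin n) (Fin n) ℝ), ‖A‖ ≤ β →
      ∀ (X : Matrix (Fin n) (Fin d) ℝ), ‖X‖ ≤ β →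
      ∀ (W : ℕ → Matrix (Fin d) (Fin d) ℝ), (∀ k, k < l → ‖W k‖ ≤ β) →
      ∀ l', l' ≤ l → ‖gcnH A X W σ l'‖ ≤ C := by
  induction l with
  | zero =>
    refine ⟨β, hβ, fun σ hσ h0 A hA X hX W hW l' hl' => ?_⟩
    have : l' = 0 := Nat.le_zero.mp hl'
    subst this
    exact hX
  | succ l ih =>
    obtain ⟨C, hC, hCb⟩ := ih
    refine ⟨max C (ρ * ((d : ℝ) * ((n : ℝ) * β * C) * β)), le_max_of_le_left hC, ?_⟩
    intro σ hσ h0 A hA X hX W hW l' hl'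
    rcases Nat.lt_or_ge l' (l + 1) with h | h
    · exact le_trans
        (hCb σ hσ h0 A hA X hX W (fun k hk => hW k (hk.trans (Nat.lt_succ_self l)))
          l' (Nat.lt_succ_iff.mp h)) (le_max_left _ _)
    · have hl'' : l' = l + 1 := le_antisymm hl' h
      subst hl''
      refine le_trans ?_ (le_max_right _ _)
      have hH : ‖gcnH A X W σ l‖ ≤ C :=
        hCb σ hσ h0 A hA X hX W (fun k hk => hW k (hk.trans (Nat.lt_succ_self l))) l le_rfl
      have h1 : ‖A * gcnH A X W σ l‖ ≤ (n : ℝ) * β * C :=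
        le_trans (mulNormBound A _) (by gcongr)
      have h2 : ‖A * gcnH A X W σ l * W l‖ ≤ (d : ℝ) * ((n : ℝ) * β * C) * β := by
        refine le_trans (mulNormBound _ _) ?_
        have hWl : ‖W l‖ ≤ β := hW l (Nat.lt_succ_self l)
        gcongr
      show ‖(A * gcnH A X W σ l * W l).map σ‖ ≤ _
      exact le_trans (mapZeroBound hρ σ hσ h0 _) (by gcongr)

lemma hDiff {n d : ℕ} {ρ β : ℝ} (hρ : 0 ≤ ρ) (hβ : 0 ≤ β) (l : ℕ) :
    ∃ C : ℝ, 0 ≤ C ∧ ∀ (σ : ℝ → ℝ), (∀ x y : ℝ, |σ x - σ y| ≤ ρ * |x - y|) → σ 0 = 0 →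
      ∀ (A ASG : Matrix (Fin n) (Fin n) ℝ), ‖A‖ ≤ β → ‖ASG‖ ≤ β →
      ∀ (X : Matrix (Fin n) (Fin d) ℝ), ‖X‖ ≤ β →
      ∀ (W : ℕ → Matrix (Fin d) (Fin d) ℝ), (∀ k, k < l → ‖W k‖ ≤ β) →
      ∀ l', l' ≤ l → ‖gcnH ASG X W σ l' - gcnH A X W σ l'‖ ≤ C * ‖ASG - A‖ := by
  induction l with
  | zero =>
    refine ⟨0, le_rfl, fun σ hσ h0 A ASG hA hASG X hX W hW l' hl' => ?_⟩
    have : l' = 0 := Nat.le_zero.mp hl'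
    subst this
    simp [gcnH]
  | succ l ih =>
    obtain ⟨C, hC, hCb⟩ := ih
    obtain ⟨CH, hCH, hCHb⟩ := hBound (n := n) (d := d) hρ hβ l
    refine ⟨max C (ρ * ((d : ℝ) * ((n : ℝ) * CH + (n : ℝ) * β * C) * β)),
      le_max_of_le_left hC, ?_⟩
    intro σ hσ h0 A ASG hA hASG X hX W hW l' hl'
    have hWl : ∀ k, k < l → ‖W k‖ ≤ β := fun k hk => hW k (hk.trans (Nat.lt_succ_self l))
    rcases Nat.lt_or_ge l' (l + 1) with h | h
    · exact le_trans (hCb σ hσ h0 A ASG hA hASG X hX W hWl l' (Nat.lt_succ_iff.mp h))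
        (mul_le_mul_of_nonneg_right (le_max_left _ _) (norm_nonneg _))
    · have hl'' : l' = l + 1 := le_antisymm hl' h
      subst hl''
      set H := gcnH A X W σ l with hHdef
      set HSG := gcnH ASG X W σ l with hHSGdef
      have hH : ‖HSG - H‖ ≤ C * ‖ASG - A‖ := hCb σ hσ h0 A ASG hA hASG X hX W hWl l le_rfl
      have hHSG : ‖HSG‖ ≤ CH := hCHb σ hσ h0 ASG hASG X hX W hWl l le_rfl
      have key : gcnH ASG X W σ (l + 1) - gcnH A X W σ (l + 1)
          = (ASG * HSG * W l).map σ - (A * H * W l).map σ := rfl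
      rw [key]
      have hsplit : ASG * HSG * W l - A * H * W l
          = ((ASG - A) * HSG + A * (HSG - H)) * W l := by
        rw [← Matrix.sub_mul, mulSplit]
      have h1 : ‖(ASG - A) * HSG‖ ≤ (n : ℝ) * ‖ASG - A‖ * CH :=
        le_trans (mulNormBound _ _) (by gcongr)
      have h2 : ‖A * (HSG - H)‖ ≤ (n : ℝ) * β * (C * ‖ASG - A‖) :=
        le_trans (mulNormBound _ _) (by gcongr)
      have h3 : ‖((ASG - A) * HSG + A * (HSG - H)) * W l‖
          ≤ (d : ℝ) * ((n : ℝ) * ‖ASG - A‖ * CH + (n : ℝ) * β * (C * ‖ASG - A‖)) * β := by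
        refine le_trans (mulNormBound _ _) ?_
        have hWll : ‖W l‖ ≤ β := hW l (Nat.lt_succ_self l)
        have hadd : ‖(ASG - A) * HSG + A * (HSG - H)‖
            ≤ (n : ℝ) * ‖ASG - A‖ * CH + (n : ℝ) * β * (C * ‖ASG - A‖) :=
          le_trans (norm_add_le _ _) (add_le_add h1 h2)
        gcongr
      calc ‖(ASG * HSG * W l).map σ - (A * H * W l).map σ‖
          ≤ ρ * ‖ASG * HSG * W l - A * H * W l‖ := mapLipBound hρ σ hσ _ _
        _ ≤ ρ * ((d : ℝ) * ((n : ℝ) * ‖ASG - A‖ * CH + (n : ℝ) * β * (C * ‖ASG - A‖)) * β) := by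
            rw [hsplit]; gcongr
        _ = (ρ * ((d : ℝ) * ((n : ℝ) * CH + (n : ℝ) * β * C) * β)) * ‖ASG - A‖ := by ring
        _ ≤ max C (ρ * ((d : ℝ) * ((n : ℝ) * CH + (n : ℝ) * β * C) * β)) * ‖ASG - A‖ :=
            mul_le_mul_of_nonneg_right (le_max_right _ _) (norm_nonneg _)

lemma zDiff {n d : ℕ} {ρ β : ℝ} (hρ : 0 ≤ ρ) (hβ : 0 ≤ β) (l : ℕ) :
    ∃ C : ℝ, 0 ≤ C ∧ ∀ (σ : ℝ → ℝ), (∀ x y : ℝ, |σ x - σ y| ≤ ρ * |x - y|) → σ 0 = 0 →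
      ∀ (A ASG : Matrix (Fin n) (Fin n) ℝ), ‖A‖ ≤ β → ‖ASG‖ ≤ β →
      ∀ (X : Matrix (Fin n) (Fin d) ℝ), ‖X‖ ≤ β →
      ∀ (W : ℕ → Matrix (Fin d) (Fin d) ℝ), (∀ k, k < l → ‖W k‖ ≤ β) →
      ∀ l', l' ≤ l → ‖gcnZ ASG X W σ l' - gcnZ A X W σ l'‖ ≤ C * ‖ASG - A‖ := by
  obtain ⟨C, hC, hCb⟩ := hDiff (n := n) (d := d) hρ hβ l
  obtain ⟨CH, hCH, hCHb⟩ := hBound (n := n) (d := d) hρ hβ l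
  refine ⟨(d : ℝ) * ((n : ℝ) * CH + (n : ℝ) * β * C) * β, by positivity, ?_⟩
  intro σ hσ h0 A ASG hA hASG X hX W hW l' hl'
  match l', hl' with
  | 0, _ => simp [gcnZ]; positivity
  | (k + 1), hl' =>
    have hk : k ≤ l := Nat.le_of_succ_le hl'
    have hWk : ∀ k', k' < k → ‖W k'‖ ≤ β := fun k' hk' => hW k' (hk'.trans_le hk)
    set H := gcnH A X W σ k with hHdef
    set HSG := gcnH ASG X W σ k with hHSGdef
    have hH : ‖HSG - H‖ ≤ C * ‖ASG - A‖ := hCb σ hσ h0 A ASG hA hASG X hX W hW k hk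
    have hHSG : ‖HSG‖ ≤ CH := hCHb σ hσ h0 ASG hASG X hX W hW k hk
    have key : gcnZ ASG X W σ (k + 1) - gcnZ A X W σ (k + 1)
        = ASG * HSG * W k - A * H * W k := rfl
    rw [key]
    have hsplit : ASG * HSG * W k - A * H * W k
        = ((ASG - A) * HSG + A * (HSG - H)) * W k := by
      rw [← Matrix.sub_mul, mulSplit]
    have h1 : ‖(ASG - A) * HSG‖ ≤ (n : ℝ) * ‖ASG - A‖ * CH :=
      le_trans (mulNormBound _ _) (by gcongr)
    have h2 : ‖A * (HSG - H)‖ ≤ (n : ℝ) * β * (C * ‖ASG - A‖) :=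
      le_trans (mulNormBound _ _) (by gcongr)
    have hWkl : ‖W k‖ ≤ β := hW k (Nat.lt_of_succ_le hl')
    have hadd : ‖(ASG - A) * HSG + A * (HSG - H)‖
        ≤ (n : ℝ) * ‖ASG - A‖ * CH + (n : ℝ) * β * (C * ‖ASG - A‖) :=
      le_trans (norm_add_le _ _) (add_le_add h1 h2)
    calc ‖ASG * HSG * W k - A * H * W k‖
        ≤ (d : ℝ) * ((n : ℝ) * ‖ASG - A‖ * CH + (n : ℝ) * β * (C * ‖ASG - A‖)) * β := by
          rw [hsplit]
          exact le_trans (mulNormBound _ _) (by gcongr)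
      _ = ((d : ℝ) * ((n : ℝ) * CH + (n : ℝ) * β * C) * β) * ‖ASG - A‖ := by ring

lemma gBound {n d L : ℕ} {β : ℝ} (hβ : 0 ≤ β) (j : ℕ) :
    ∃ C : ℝ, 0 ≤ C ∧ ∀ (A : Matrix (Fin n) (Fin n) ℝ), ‖A‖ ≤ β →
      ∀ (W : ℕ → Matrix (Fin d) (Fin d) ℝ), (∀ k, k < L → ‖W k‖ ≤ β) →
      ∀ (S : ℕ → Matrix (Fin n) (Fin d) ℝ), (∀ k, ‖S k‖ ≤ β) →
      ∀ (G : ℕ → Matrix (Fin n) (Fin d) ℝ), ‖G L‖ ≤ β →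
      (∀ k, 1 ≤ k → k < L → G k = Matrix.hadamard (S k) (Aᵀ * G (k + 1) * (W k)ᵀ)) →
      ∀ j', j' ≤ j → j' < L → ‖G (L - j')‖ ≤ C := by
  induction j with
  | zero =>
    refine ⟨β, hβ, fun A hA W hW S hS G hGL hGrec j' hj' _ => ?_⟩
    have : j' = 0 := Nat.le_zero.mp hj'
    subst this
    simpa using hGL
  | succ j ih =>
    obtain ⟨C, hC, hCb⟩ := ih
    refine ⟨max C (β * ((d : ℝ) * ((n : ℝ) * β * C) * β)), le_max_of_le_left hC, ?_⟩
    intro A hA W hW S hS G hGL hGrec j' hj' hj'L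
    rcases Nat.lt_or_ge j' (j + 1) with h | h
    · exact le_trans (hCb A hA W hW S hS G hGL hGrec j' (Nat.lt_succ_iff.mp h) hj'L)
        (le_max_left _ _)
    · have hj'' : j' = j + 1 := le_antisymm hj' h
      subst hj''
      refine le_trans ?_ (le_max_right _ _)
      set l := L - (j + 1) with hldef
      have hl1 : 1 ≤ l := by omega
      have hlL : l < L := by omega
      have hlj : l + 1 = L - j := by omega
      have hGprev : ‖G (l + 1)‖ ≤ C := by
        rw [hlj]
        exact hCb A hA W hW S hS G hGL hGrec j (le_refl j) (by omega)
      rw [hGrec l hl1 hlL]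
      have hB1 : ‖Aᵀ * G (l + 1)‖ ≤ (n : ℝ) * β * C := by
        refine le_trans (mulNormBound _ _) ?_
        rw [Matrix.norm_transpose]
        gcongr
      have hB2 : ‖Aᵀ * G (l + 1) * (W l)ᵀ‖ ≤ (d : ℝ) * ((n : ℝ) * β * C) * β := by
        refine le_trans (mulNormBound _ _) ?_
        have hWl : ‖(W l)ᵀ‖ ≤ β := by rw [Matrix.norm_transpose]; exact hW l hlL
        gcongr
      exact le_trans (hadNormBound _ _) (by gcongr; exact hS l)

lemma gDiff {n d L : ℕ} {ρ β : ℝ} (hρ : 0 ≤ ρ) (hβ : 0 ≤ β) (j : ℕ) :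
    ∃ C : ℝ, 0 ≤ C ∧
      ∀ (σ : ℝ → ℝ), (∀ x y : ℝ, |σ x - σ y| ≤ ρ * |x - y|) → σ 0 = 0 →
      ∀ (σ' : ℝ → ℝ), (∀ x : ℝ, |σ' x| ≤ β) →
        (∀ x y : ℝ, |σ' x - σ' y| ≤ ρ * |x - y|) →
      ∀ (Φ : Matrix (Fin n) (Fin d) ℝ → Matrix (Fin n) (Fin d) ℝ),
        (∀ Z₁ Z₂, ‖Φ Z₁ - Φ Z₂‖ ≤ ρ * ‖Z₁ - Z₂‖) → (∀ Z, ‖Φ Z‖ ≤ β) →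
      ∀ (A ASG : Matrix (Fin n) (Fin n) ℝ), ‖A‖ ≤ β → ‖ASG‖ ≤ β →
      ∀ (X : Matrix (Fin n) (Fin d) ℝ), ‖X‖ ≤ β →
      ∀ (W : ℕ → Matrix (Fin d) (Fin d) ℝ), (∀ k, k < L → ‖W k‖ ≤ β) →
      ∀ (G GSG : ℕ → Matrix (Fin n) (Fin d) ℝ),
        G L = Φ (gcnZ A X W σ L) →
        GSG L = Φ (gcnZ ASG X W σ L) →
        (∀ k, 1 ≤ k → k < L →
          G k = Matrix.hadamard ((gcnZ A X W σ k).map σ') (Aᵀ * G (k + 1) * (W k)ᵀ)) →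
        (∀ k, 1 ≤ k → k < L →
          GSG k = Matrix.hadamard ((gcnZ ASG X W σ k).map σ') (ASGᵀ * GSG (k + 1) * (W k)ᵀ)) →
      ∀ j', j' ≤ j → j' < L →
        ‖GSG (L - j') - G (L - j')‖ ≤ C * ‖ASG - A‖ := by
  obtain ⟨CZ, hCZ, hCZb⟩ := zDiff (n := n) (d := d) hρ hβ L
  induction j with
  | zero =>
    refine ⟨ρ * CZ, by positivity, ?_⟩
    intro σ hσ h0 σ' hσ'b hσ'l Φ hΦl hΦb A ASG hA hASG X hX W hW G GSG hGL hGSGL hGrec hGSGrec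
      j' hj' hj'L
    have : j' = 0 := Nat.le_zero.mp hj'
    subst this
    simp only [Nat.sub_zero]
    rw [hGL, hGSGL]
    calc ‖Φ (gcnZ ASG X W σ L) - Φ (gcnZ A X W σ L)‖
        ≤ ρ * ‖gcnZ ASG X W σ L - gcnZ A X W σ L‖ := hΦl _ _
      _ ≤ ρ * (CZ * ‖ASG - A‖) := by
          have := hCZb σ hσ h0 A ASG hA hASG X hX W hW L le_rfl
          gcongr
      _ = (ρ * CZ) * ‖ASG - A‖ := by ring
  | succ j ih =>
    obtain ⟨C, hC, hCb⟩ := ih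
    obtain ⟨CG, hCG, hCGb⟩ := gBound (n := n) (d := d) (L := L) hβ j
    refine ⟨max C (ρ * CZ * ((d : ℝ) * ((n : ℝ) * β * CG) * β)
        + β * ((d : ℝ) * ((n : ℝ) * CG + (n : ℝ) * β * C) * β)),
      le_max_of_le_left hC, ?_⟩
    intro σ hσ h0 σ' hσ'b hσ'l Φ hΦl hΦb A ASG hA hASG X hX W hW G GSG hGL hGSGL hGrec hGSGrec
      j' hj' hj'L
    rcases Nat.lt_or_ge j' (j + 1) with h | h
    · exact le_trans
        (hCb σ hσ h0 σ' hσ'b hσ'l Φ hΦl hΦb A ASG hA hASG X hX W hW G GSG hGL hGSGL hGrec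
          hGSGrec j' (Nat.lt_succ_iff.mp h) hj'L)
        (mul_le_mul_of_nonneg_right (le_max_left _ _) (norm_nonneg _))
    · have hj'' : j' = j + 1 := le_antisymm hj' h
      subst hj''
      refine le_trans ?_
        (mul_le_mul_of_nonneg_right (le_max_right _ _) (norm_nonneg _))
      set l := L - (j + 1) with hldef
      have hl1 : 1 ≤ l := by omega
      have hlL : l < L := by omega
      have hlj : l + 1 = L - j := by omega
      -- bound on GSG (l+1)
      have hGSGbound : ‖GSG (l + 1)‖ ≤ CG := by
        rw [hlj]
        refine hCGb ASG hASG W hW (fun k => (gcnZ ASG X W σ k).map σ')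
          (fun k => mapNormBound σ' hσ'b _) GSG ?_ hGSGrec j le_rfl (by omega)
        rw [hGSGL]; exact hΦb _
      -- diff of G at l+1
      have hGdiff : ‖GSG (l + 1) - G (l + 1)‖ ≤ C * ‖ASG - A‖ := by
        rw [hlj]
        exact hCb σ hσ h0 σ' hσ'b hσ'l Φ hΦl hΦb A ASG hA hASG X hX W hW G GSG hGL hGSGL
          hGrec hGSGrec j le_rfl (by omega)
      -- diff of Z at l
      have hZdiff : ‖gcnZ ASG X W σ l - gcnZ A X W σ l‖ ≤ CZ * ‖ASG - A‖ :=
        hCZb σ hσ h0 A ASG hA hASG X hX W hW l hlL.le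
      rw [hGSGrec l hl1 hlL, hGrec l hl1 hlL, hadSplit]
      have hSdiff : ‖(gcnZ ASG X W σ l).map σ' - (gcnZ A X W σ l).map σ'‖
          ≤ ρ * (CZ * ‖ASG - A‖) := by
        refine le_trans (mapLipBound hρ σ' hσ'l _ _) ?_
        gcongr
      have hBSG : ‖ASGᵀ * GSG (l + 1) * (W l)ᵀ‖ ≤ (d : ℝ) * ((n : ℝ) * β * CG) * β := by
        refine le_trans (mulNormBound _ _) ?_
        have h1 : ‖ASGᵀ * GSG (l + 1)‖ ≤ (n : ℝ) * β * CG := by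
          refine le_trans (mulNormBound _ _) ?_
          rw [Matrix.norm_transpose]
          gcongr
        have hWl : ‖(W l)ᵀ‖ ≤ β := by rw [Matrix.norm_transpose]; exact hW l hlL
        gcongr
      have hT1 : ‖Matrix.hadamard ((gcnZ ASG X W σ l).map σ' - (gcnZ A X W σ l).map σ')
            (ASGᵀ * GSG (l + 1) * (W l)ᵀ)‖
          ≤ ρ * (CZ * ‖ASG - A‖) * ((d : ℝ) * ((n : ℝ) * β * CG) * β) :=
        le_trans (hadNormBound _ _) (by gcongr)
      have hBdiff : ‖ASGᵀ * GSG (l + 1) * (W l)ᵀ - Aᵀ * G (l + 1) * (W l)ᵀ‖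
          ≤ (d : ℝ) * ((n : ℝ) * ‖ASG - A‖ * CG + (n : ℝ) * β * (C * ‖ASG - A‖)) * β := by
        have hsplit : ASGᵀ * GSG (l + 1) * (W l)ᵀ - Aᵀ * G (l + 1) * (W l)ᵀ
            = ((ASGᵀ - Aᵀ) * GSG (l + 1) + Aᵀ * (GSG (l + 1) - G (l + 1))) * (W l)ᵀ := by
          rw [← Matrix.sub_mul, mulSplit]
        rw [hsplit]
        have hAT : ‖ASGᵀ - Aᵀ‖ = ‖ASG - A‖ := by
          rw [← Matrix.transpose_sub, Matrix.norm_transpose]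
        have h1 : ‖(ASGᵀ - Aᵀ) * GSG (l + 1)‖ ≤ (n : ℝ) * ‖ASG - A‖ * CG := by
          refine le_trans (mulNormBound _ _) ?_
          rw [hAT]
          gcongr
        have h2 : ‖Aᵀ * (GSG (l + 1) - G (l + 1))‖ ≤ (n : ℝ) * β * (C * ‖ASG - A‖) := by
          refine le_trans (mulNormBound _ _) ?_
          rw [Matrix.norm_transpose]
          gcongr
        have hWl : ‖(W l)ᵀ‖ ≤ β := by rw [Matrix.norm_transpose]; exact hW l hlL
        refine le_trans (mulNormBound _ _) ?_
        have hadd := le_trans (norm_add_le _ _) (add_le_add h1 h2)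
        gcongr
      have hT2 : ‖Matrix.hadamard ((gcnZ A X W σ l).map σ')
            (ASGᵀ * GSG (l + 1) * (W l)ᵀ - Aᵀ * G (l + 1) * (W l)ᵀ)‖
          ≤ β * ((d : ℝ) * ((n : ℝ) * ‖ASG - A‖ * CG + (n : ℝ) * β * (C * ‖ASG - A‖)) * β) := by
        refine le_trans (hadNormBound _ _) ?_
        have hS : ‖(gcnZ A X W σ l).map σ'‖ ≤ β := mapNormBound σ' hσ'b _
        gcongr
      calc ‖Matrix.hadamard ((gcnZ ASG X W σ l).map σ' - (gcnZ A X W σ l).map σ')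
              (ASGᵀ * GSG (l + 1) * (W l)ᵀ)
            + Matrix.hadamard ((gcnZ A X W σ l).map σ')
              (ASGᵀ * GSG (l + 1) * (W l)ᵀ - Aᵀ * G (l + 1) * (W l)ᵀ)‖
          ≤ ρ * (CZ * ‖ASG - A‖) * ((d : ℝ) * ((n : ℝ) * β * CG) * β)
            + β * ((d : ℝ) * ((n : ℝ) * ‖ASG - A‖ * CG + (n : ℝ) * β * (C * ‖ASG - A‖)) * β) :=
            le_trans (norm_add_le _ _) (add_le_add hT1 hT2)
        _ = (ρ * CZ * ((d : ℝ) * ((n : ℝ) * β * CG) * β)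
            + β * ((d : ℝ) * ((n : ℝ) * CG + (n : ℝ) * β * C) * β)) * ‖ASG - A‖ := by ring

/-- Error bound for the gradients `G^(l) = ∂f/∂Z^(l)` of a multi-layer GCN:
there is a constant `C`, depending only on ρ, β, n, d, L, such that the
gradients of the SG estimator (forward and backward recursions with `A_SG` in
place of `A`, terminal gradient `Φ(Z^(L))` resp. `Φ(Z_SG^(L))`) satisfy
`‖G_SG^(l) - G^(l)‖ ≤ C * ‖A_SG - A‖` for all `1 ≤ l ≤ L`. -/
theorem gcn_gradZ_error_bounded {n d L : ℕ} (hn : 0 < n) (hd : 0 < d) (hL : 0 < L)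
    {ρ β : ℝ} (hρ : 0 ≤ ρ) (hβ : 0 ≤ β) :
    ∃ C : ℝ, 0 ≤ C ∧
      ∀ (σ : ℝ → ℝ), (∀ x y : ℝ, |σ x - σ y| ≤ ρ * |x - y|) → σ 0 = 0 →
      ∀ (σ' : ℝ → ℝ), (∀ x : ℝ, |σ' x| ≤ β) →
        (∀ x y : ℝ, |σ' x - σ' y| ≤ ρ * |x - y|) →
      ∀ (Φ : Matrix (Fin n) (Fin d) ℝ → Matrix (Fin n) (Fin d) ℝ),
        (∀ Z₁ Z₂, ‖Φ Z₁ - Φ Z₂‖ ≤ ρ * ‖Z₁ - Z₂‖) → (∀ Z, ‖Φ Z‖ ≤ β) →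
      ∀ (A ASG : Matrix (Fin n) (Fin n) ℝ), ‖A‖ ≤ β → ‖ASG‖ ≤ β →
      ∀ (X : Matrix (Fin n) (Fin d) ℝ), ‖X‖ ≤ β →
      ∀ (W : ℕ → Matrix (Fin d) (Fin d) ℝ), (∀ l, l < L → ‖W l‖ ≤ β) →
      ∀ (G GSG : ℕ → Matrix (Fin n) (Fin d) ℝ),
        G L = Φ (gcnZ A X W σ L) →
        GSG L = Φ (gcnZ ASG X W σ L) →
        (∀ l, 1 ≤ l → l < L →
          G l = Matrix.hadamard ((gcnZ A X W σ l).map σ')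
            (Aᵀ * G (l + 1) * (W l)ᵀ)) →
        (∀ l, 1 ≤ l → l < L →
          GSG l = Matrix.hadamard ((gcnZ ASG X W σ l).map σ')
            (ASGᵀ * GSG (l + 1) * (W l)ᵀ)) →
      ∀ l, 1 ≤ l → l ≤ L → ‖GSG l - G l‖ ≤ C * ‖ASG - A‖ := by
  obtain ⟨C, hC, hCb⟩ := gDiff (n := n) (d := d) (L := L) hρ hβ (L - 1)
  refine ⟨C, hC, ?_⟩
  intro σ hσ h0 σ' hσ'b hσ'l Φ hΦl hΦb A ASG hA hASG X hX W hW G GSG hGL hGSGL hGrec hGSGrec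
    l hl1 hlL
  have h1 : L - (L - l) = l := by omega
  have h2 := hCb σ hσ h0 σ' hσ'b hσ'l Φ hΦl hΦb A ASG hA hASG X hX W hW G GSG hGL hGSGL
    hGrec hGSGrec (L - l) (by omega) (by omega)
  rwa [h1] at h2
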